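/- Let A be an integral domain such that every w-ideal of A is finitely generated. Then A is GV(A)-Noetherian: for every ideal I of A there exist a GV-ideal J of A and a finitely generated subideal F ⊆ I such that J·I ⊆ F. -/

import Mathlib

/-- `J` is a GV-ideal of the domain `A`. -/
def IsGVIdeal (A : Type*) [CommRing A] [IsDomain A] (J : Ideal A) : Prop :=
  J.FG ∧ ∀ x : FractionRing A,
    (∀ a ∈ J, x * algebraMap A (FractionRing A) a ∈
      Set.range (algebraMap A (FractionRing A))) →
    x ∈ Set.range (algebraMap A (FractionRing A))

/-- The `w`-closure of an ideal `I`, as a subset of the quotient field: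
`I_w = {x ∈ K : Jx ⊆ I for some GV-ideal J}`. -/
def wClosure {A : Type*} [CommRing A] [IsDomain A] (I : Ideal A) : Set (FractionRing A) :=
  {x : FractionRing A | ∃ J : Ideal A, IsGVIdeal A J ∧
    ∀ a ∈ J, x * algebraMap A (FractionRing A) a ∈
      algebraMap A (FractionRing A) '' I}

section Aux

variable {A : Type*} [CommRing A] [IsDomain A]

lemma gv_top : IsGVIdeal A ⊤ := by
  refine ⟨⟨{1}, by simp⟩, fun x hx => ?_⟩
  simpa using hx 1 trivial

lemma gv_mul {J₁ J₂ : Ideal A} (h₁ : IsGVIdeal A J₁) (h₂ : IsGVIdeal A J₂) :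
    IsGVIdeal A (J₁ * J₂) := by
  refine ⟨Submodule.FG.mul h₁.1 h₂.1, fun x hx => ?_⟩
  apply h₁.2 x
  intro a ha
  apply h₂.2 (x * algebraMap A (FractionRing A) a)
  intro b hb
  have := hx (a * b) (Ideal.mul_mem_mul ha hb)
  rwa [map_mul, ← mul_assoc] at this

lemma gv_prod {ι : Type*} (s : Finset ι) (f : ι → Ideal A)
    (h : ∀ i ∈ s, IsGVIdeal A (f i)) : IsGVIdeal A (∏ i ∈ s, f i) := by
  classical
  refine Finset.prod_induction f (IsGVIdeal A) (fun _ _ => gv_mul) ?_ h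
  rw [Ideal.one_eq_top]; exact gv_top

/-- The `w`-closure of `I`, as an ideal of `A`. -/
def IwIdeal (I : Ideal A) : Ideal A where
  carrier := {a | ∃ J : Ideal A, IsGVIdeal A J ∧ ∀ j ∈ J, a * j ∈ I}
  zero_mem' := ⟨⊤, gv_top, fun j _ => by simp⟩
  add_mem' := by
    rintro a b ⟨J₁, h₁, p₁⟩ ⟨J₂, h₂, p₂⟩
    refine ⟨J₁ * J₂, gv_mul h₁ h₂, fun j hj => ?_⟩
    rw [add_mul]
    exact I.add_mem (p₁ j (Ideal.mul_le_left hj)) (p₂ j (Ideal.mul_le_right hj))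
  smul_mem' := by
    rintro c a ⟨J, hJ, p⟩
    refine ⟨J, hJ, fun j hj => ?_⟩
    have : c * (a * j) ∈ I := I.mul_mem_left c (p j hj)
    simpa [smul_eq_mul, mul_assoc] using this

lemma le_IwIdeal (I : Ideal A) : I ≤ IwIdeal I :=
  fun a ha => ⟨⊤, gv_top, fun j _ => I.mul_mem_right j ha⟩

lemma image_subset_wClosure (I : Ideal A) :
    algebraMap A (FractionRing A) '' I ⊆ wClosure I := by
  rintro _ ⟨a, ha, rfl⟩
  refine ⟨⊤, gv_top, fun j _ => ?_⟩
  exact ⟨a * j, I.mul_mem_right j ha, by rw [map_mul]⟩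

lemma wClosure_IwIdeal (I : Ideal A) :
    wClosure (IwIdeal I) = algebraMap A (FractionRing A) '' (IwIdeal I) := by
  classical
  apply Set.Subset.antisymm _ (image_subset_wClosure _)
  rintro x ⟨J, hJ, hx⟩
  -- x is in the range of algebraMap
  obtain ⟨b, rfl⟩ := hJ.2 x (fun a ha => by
    obtain ⟨c, _, hc⟩ := hx a ha
    exact ⟨c, hc⟩)
  refine ⟨b, ?_, rfl⟩
  -- each b * a is in IwIdeal I, for a ∈ J
  have inj : Function.Injective (algebraMap A (FractionRing A)) :=
    IsFractionRing.injective A (FractionRing A)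
  have hmem : ∀ a ∈ J, b * a ∈ IwIdeal I := by
    intro a ha
    obtain ⟨c, hc, hc'⟩ := hx a ha
    rw [← map_mul] at hc'
    rwa [← inj hc']
  obtain ⟨s, hs⟩ := hJ.1
  have hgen : ∀ a ∈ s, ∃ J' : Ideal A, IsGVIdeal A J' ∧ ∀ t ∈ J', b * a * t ∈ I := by
    intro a ha
    have : b * a ∈ IwIdeal I := hmem a (hs ▸ Ideal.subset_span ha)
    obtain ⟨J', hJ', p⟩ := this
    exact ⟨J', hJ', p⟩
  choose g hg₁ hg₂ using hgen
  set K : Ideal A := ∏ a ∈ s.attach, g a a.2 with hK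
  have hKgv : IsGVIdeal A K := gv_prod _ _ (fun i _ => hg₁ i i.2)
  have hKle : ∀ a (ha : a ∈ s), K ≤ g a ha := by
    intro a ha
    calc K ≤ s.attach.inf (fun i => g i i.2) := Ideal.prod_le_inf
    _ ≤ g a ha := Finset.inf_le (s.mem_attach ⟨a, ha⟩)
  refine ⟨J * K, gv_mul hJ hKgv, fun t ht => ?_⟩
  have : J * K ≤ I.colon (Ideal.span {b}) := by
    rw [Ideal.mul_le]
    intro j hj k hk
    have hJle : J ≤ I.colon (Ideal.span {k * b}) := by
      rw [← hs, Ideal.span_le]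
      intro a ha
      rw [SetLike.mem_coe, Ideal.mem_colon_span_singleton]
      have : b * a * k ∈ I := hg₂ a ha k (hKle a ha hk)
      rw [show a * (k * b) = b * a * k by ring]
      exact this
    have := hJle hj
    rw [Ideal.mem_colon_span_singleton] at this
    rw [Ideal.mem_colon_span_singleton, mul_assoc]
    exact this
  have := this ht
  rw [Ideal.mem_colon_span_singleton] at this
  rwa [mul_comm]

end Aux

theorem gv_noetherian_of_w_ideals_fg {A : Type*} [CommRing A] [IsDomain A]
    (hw : ∀ I : Ideal A, wClosure I = algebraMap A (FractionRing A) '' I → I.FG) :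
    ∀ I : Ideal A, ∃ J : Ideal A, IsGVIdeal A J ∧
      ∃ F : Ideal A, F ≤ I ∧ F.FG ∧ J * I ≤ F := by
  classical
  intro I
  have hWfg : (IwIdeal I).FG := hw _ (wClosure_IwIdeal I)
  obtain ⟨s, hs⟩ := hWfg
  have hgen : ∀ a ∈ s, ∃ J' : Ideal A, IsGVIdeal A J' ∧ ∀ t ∈ J', a * t ∈ I := by
    intro a ha
    have : a ∈ IwIdeal I := hs ▸ Ideal.subset_span ha
    exact this
  choose g hg₁ hg₂ using hgen
  set J : Ideal A := ∏ a ∈ s.attach, g a a.2 with hJ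
  have hJgv : IsGVIdeal A J := gv_prod _ _ (fun i _ => hg₁ i i.2)
  have hJle : ∀ a (ha : a ∈ s), J ≤ g a ha := by
    intro a ha
    calc J ≤ s.attach.inf (fun i => g i i.2) := Ideal.prod_le_inf
    _ ≤ g a ha := Finset.inf_le (s.mem_attach ⟨a, ha⟩)
  refine ⟨J, hJgv, J * IwIdeal I, ?_, Submodule.FG.mul hJgv.1 ⟨s, hs⟩, Ideal.mul_mono_right (le_IwIdeal I)⟩
  rw [Ideal.mul_le]
  intro j hj w hw'
  have hWle : IwIdeal I ≤ I.colon (Ideal.span {j}) := by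
    rw [← hs, Ideal.span_le]
    intro a ha
    rw [SetLike.mem_coe, Ideal.mem_colon_span_singleton]
    exact hg₂ a ha j (hJle a ha hj)
  have := hWle hw'
  rw [Ideal.mem_colon_span_singleton] at this
  rwa [mul_comm]
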